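/- Let M be a unital C*-algebra with a tracial state τ, let B ⊆ M be a unital *-subalgebra, and let Y ⊆ M be a subset with Y* = Y (i.e. y ∈ Y implies y* ∈ Y) and τ(y) = 0 for all y ∈ Y, such that Y and {b ∈ B : τ(b) = 0} are freely independent sets with respect to τ. Let n ≥ 1, let u ∈ B be a unitary with τ(u^k) = 0 for all integers k with 1 ≤ k ≤ n−1, and let y₁, …, yₙ ∈ Y. Then the family (u^{k−1} y_k u^{−(k−1)})_{k=1,…,n} is L-free with respect to τ. -/

import Mathlib

open scoped BigOperators ComplexOrder

section Defs

variable {A : Type*} [Ring A] [StarRing A] [Algebra ℂ A]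

/-- `τ` is a (ℂ-linear) tracial state on the unital star ℂ-algebra `A`. -/
def IsTracialState (τ : A → ℂ) : Prop :=
  (∀ (c : ℂ) (x y : A), τ (c • x + y) = c * τ x + τ y) ∧
  τ 1 = 1 ∧ (∀ x : A, 0 ≤ τ (star x * x)) ∧ (∀ x y : A, τ (x * y) = τ (y * x))

/-- `τ` is faithful. -/
def IsFaithful (τ : A → ℂ) : Prop := ∀ x : A, τ (star x * x) = 0 → x = 0

def IsProjection (p : A) : Prop := star p = p ∧ p * p = p

def IsUnitary (u : A) : Prop := star u * u = 1 ∧ u * star u = 1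

/-- The alternating word `x_{i 0} (x_{i 1})* x_{i 2} (x_{i 3})* ⋯`. -/
def LWord {n m : ℕ} (x : Fin n → A) (i : Fin m → Fin n) : A :=
  (List.ofFn fun s : Fin m => if (s : ℕ) % 2 = 0 then x (i s) else star (x (i s))).prod

/-- The alternating word `(x_{i 0})* x_{i 1} (x_{i 2})* x_{i 3} ⋯`. -/
def LWordStar {n m : ℕ} (x : Fin n → A) (i : Fin m → Fin n) : A :=
  (List.ofFn fun s : Fin m => if (s : ℕ) % 2 = 0 then star (x (i s)) else x (i s)).prod

/-- L-freeness of a finite family with respect to `τ`. -/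
def IsLFree {n : ℕ} (τ : A → ℂ) (x : Fin n → A) : Prop :=
  ∀ (k : ℕ), 1 ≤ k → ∀ i : Fin (2 * k) → Fin n,
    (∀ s t : Fin (2 * k), (t : ℕ) = (s : ℕ) + 1 → i s ≠ i t) →
    τ (LWord x i) = 0 ∧ τ (LWordStar x i) = 0

/-- Integer powers of a unitary: negative powers are powers of the adjoint. -/
def zpowU (u : A) (k : ℤ) : A := if 0 ≤ k then u ^ k.toNat else star u ^ (-k).toNat

/-- `v₁, …, v_m` are freely independent Haar unitaries with respect to `τ`. -/
def AreHaarFree {m : ℕ} (τ : A → ℂ) (v : Fin m → A) : Prop :=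
  ∀ (r : ℕ), 1 ≤ r → ∀ (i : Fin r → Fin m) (e : Fin r → ℤ),
    (∀ s, e s ≠ 0) → (∀ s t : Fin r, (t : ℕ) = (s : ℕ) + 1 → i s ≠ i t) →
    τ ((List.ofFn fun s : Fin r => zpowU (v (i s)) (e s)).prod) = 0

/-- `X` and `Y` are freely independent sets with respect to `τ`: every alternating
word with letters from `X` and `Y` has zero trace. -/
def FreeSets (τ : A → ℂ) (X Y : Set A) : Prop :=
  ∀ (m : ℕ), 1 ≤ m → ∀ z : Fin m → A,
    ((∀ s : Fin m, if (s : ℕ) % 2 = 0 then z s ∈ X else z s ∈ Y) ∨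
     (∀ s : Fin m, if (s : ℕ) % 2 = 0 then z s ∈ Y else z s ∈ X)) →
    τ ((List.ofFn z).prod) = 0

end Defs

section AuxProof
set_option linter.unusedSectionVars false

section Aux
variable {A : Type*} [Ring A] [StarRing A] [Algebra ℂ A] [StarModule ℂ A]
set_option linter.unusedSectionVars false

lemma tau_add (τ : A → ℂ) (hτ : IsTracialState τ) (x y : A) : τ (x + y) = τ x + τ y := by
  simpa using hτ.1 1 x y

lemma tau_zero (τ : A → ℂ) (hτ : IsTracialState τ) : τ 0 = 0 := by
  have h := tau_add τ hτ 0 0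
  simp only [add_zero] at h
  linear_combination -h

lemma tau_smul (τ : A → ℂ) (hτ : IsTracialState τ) (c : ℂ) (x : A) : τ (c • x) = c * τ x := by
  have := hτ.1 c x 0
  simpa [tau_zero τ hτ] using this

lemma tau_star (τ : A → ℂ) (hτ : IsTracialState τ) (x : A) :
    τ (star x) = starRingEnd ℂ (τ x) := by
  have key : ∀ z : A, (τ (star z * z)).im = 0 := by
    intro z
    have := hτ.2.2.1 z
    exact (Complex.le_def.mp this).2.symm
  have h1 : (τ x + τ (star x)).im = 0 := by
    have e : star (x + 1) * (x + 1) = star x * x + (star x + (x + 1)) := by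
      simp [star_add, mul_add, add_mul]; abel
    have h := key (x + 1)
    rw [e, tau_add τ hτ, tau_add τ hτ, tau_add τ hτ, hτ.2.1] at h
    have h0 := key x
    simp only [Complex.add_im, Complex.one_im] at h ⊢
    linarith
  have h2 : (Complex.I * τ (star x) - Complex.I * τ x).im = 0 := by
    have e : star (x + Complex.I • 1) * (x + Complex.I • 1) =
        star x * x + (Complex.I • star x + ((-Complex.I) • x + 1)) := by
      rw [star_add, star_smul, star_one, add_mul, mul_add, mul_add]
      rw [smul_mul_assoc, smul_mul_assoc, mul_smul_comm, mul_smul_comm, smul_smul]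
      simp [Complex.conj_I, Complex.I_mul_I]
      abel
    have h := key (x + Complex.I • 1)
    rw [e, tau_add τ hτ, tau_add τ hτ, tau_add τ hτ, hτ.2.1,
      tau_smul τ hτ, tau_smul τ hτ] at h
    have h0 := key x
    simp only [Complex.add_im, Complex.one_im, Complex.sub_im, Complex.mul_im, Complex.neg_re,
      Complex.neg_im, Complex.I_re, Complex.I_im] at h ⊢
    linarith
  simp only [Complex.sub_im, Complex.mul_im, Complex.I_re, Complex.I_im, Complex.add_im] at h1 h2
  apply Complex.ext <;> simp [Complex.conj_re, Complex.conj_im] <;> linarith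

lemma zpowU_natCast (u : A) (m : ℕ) : zpowU u (m : ℤ) = u ^ m := by simp [zpowU]

lemma zpowU_neg_natCast (u : A) (m : ℕ) : zpowU u (-(m : ℤ)) = star u ^ m := by
  rcases Nat.eq_zero_or_pos m with rfl | hm
  · simp [zpowU]
  · rw [zpowU, if_neg (by omega)]
    simp

lemma zpowU_cast (u : A) (hu : IsUnitary u) (k : ℤ) :
    zpowU u k = ((⟨u, star u, hu.2, hu.1⟩ : Aˣ) ^ k : Aˣ) := by
  obtain ⟨m, rfl | rfl⟩ := Int.eq_nat_or_neg k
  · rw [zpowU_natCast, zpow_natCast, Units.val_pow_eq_pow_val]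
  · rw [zpowU_neg_natCast, zpow_neg, zpow_natCast, ← inv_pow, Units.val_pow_eq_pow_val]
    rfl

lemma zpowU_mul (u : A) (hu : IsUnitary u) (a b : ℤ) :
    zpowU u a * zpowU u b = zpowU u (a + b) := by
  rw [zpowU_cast u hu, zpowU_cast u hu, zpowU_cast u hu, ← Units.val_mul, ← zpow_add]

lemma zpowU_zero (u : A) : zpowU u 0 = 1 := by simp [zpowU]

end Aux

section Aux2
variable {A : Type*} [Ring A] [StarRing A] [Algebra ℂ A] [StarModule ℂ A]
set_option linter.unusedSectionVars false

/-- The letter `u^a w u^{-a}`. -/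
def conjF (u : A) (p : ℤ × A) : A := zpowU u p.1 * p.2 * zpowU u (-p.1)

/-- The interleaved word of a conjugated product. -/
def interL (u : A) : ℤ → List (ℤ × A) → List A
  | _, [] => []
  | a, (b, w) :: t => zpowU u (b - a) :: w :: interL u b t

lemma interL_prod (u : A) (hu : IsUnitary u) (l : List (ℤ × A)) (a : ℤ) :
    (interL u a l).prod =
      zpowU u (-a) * (l.map (conjF u)).prod *
        zpowU u ((l.getLast?.map Prod.fst).getD a) := by
  induction l generalizing a with
  | nil =>
      simp [interL, zpowU_mul u hu, zpowU_zero]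
  | cons p t ih =>
      obtain ⟨b, w⟩ := p
      have hlast : (((b, w) :: t).getLast?.map Prod.fst).getD a
          = ((t.getLast?.map Prod.fst).getD b) := by
        cases t with
        | nil => simp
        | cons q t' => rw [List.getLast?_cons_cons, List.getLast?_eq_getLast (l := q :: t') (by simp)]; simp
      rw [hlast, interL, List.prod_cons, List.prod_cons, ih b, List.map_cons, List.prod_cons]
      rw [show zpowU u (b - a) = zpowU u (-a) * zpowU u b by rw [zpowU_mul u hu]; ring_nf,
        conjF]
      simp only [mul_assoc]
end Aux2

section Aux3
variable {A : Type*} [Ring A] [StarRing A] [Algebra ℂ A] [StarModule ℂ A]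
set_option linter.unusedSectionVars false

lemma tau_zpowU (τ : A → ℂ) (hτ : IsTracialState τ) (n : ℕ) (u : A)
    (hupow : ∀ k : ℕ, 1 ≤ k → k ≤ n - 1 → τ (u ^ k) = 0)
    (d : ℤ) (hd0 : d ≠ 0) (hd1 : -((n : ℤ) - 1) ≤ d) (hd2 : d ≤ (n : ℤ) - 1) :
    τ (zpowU u d) = 0 := by
  rcases lt_or_gt_of_ne hd0 with h | h
  · have e : zpowU u d = star (u ^ (-d).toNat) := by
      rw [zpowU, if_neg (by omega), star_pow]
    rw [e, tau_star τ hτ, hupow (-d).toNat (by omega) (by omega), map_zero]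
  · rw [zpowU, if_pos (by omega)]
    exact hupow d.toNat (by omega) (by omega)

lemma zpowU_mem (B : StarSubalgebra ℂ A) (u : A) (huB : u ∈ B) (d : ℤ) : zpowU u d ∈ B := by
  rw [zpowU]
  split
  · exact pow_mem huB _
  · exact pow_mem (star_mem huB) _

lemma interL_get_mem (τ : A → ℂ) (hτ : IsTracialState τ) (B : StarSubalgebra ℂ A) (Y : Set A)
    (n : ℕ) (u : A) (huB : u ∈ B)
    (hupow : ∀ k : ℕ, 1 ≤ k → k ≤ n - 1 → τ (u ^ k) = 0) :
    ∀ (l : List (ℤ × A)) (a : ℤ), 0 ≤ a → a ≤ (n : ℤ) - 1 →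
      (∀ p ∈ l, p.2 ∈ Y ∧ 0 ≤ p.1 ∧ p.1 ≤ (n : ℤ) - 1) →
      List.Chain (fun x y : ℤ => x ≠ y) a (l.map Prod.fst) →
      ∀ (j : ℕ) (h : j < (interL u a l).length),
        if j % 2 = 0 then (interL u a l).get ⟨j, h⟩ ∈ {b : A | b ∈ B ∧ τ b = 0}
        else (interL u a l).get ⟨j, h⟩ ∈ Y := by
  intro l
  induction l with
  | nil => intro a _ _ _ _ j h; simp [interL] at h
  | cons p t ih =>
      obtain ⟨b, w⟩ := p
      intro a ha0 ha1 hmem hchain j h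
      rw [List.map_cons] at hchain; unfold List.Chain at hchain; rw [List.isChain_cons_cons] at hchain
      have hbw := hmem (b, w) List.mem_cons_self
      match j with
      | 0 =>
          simp only [Nat.zero_mod, if_pos rfl]
          refine ⟨zpowU_mem B u huB _, tau_zpowU τ hτ n u hupow _ ?_ (by omega) (by omega)⟩
          exact sub_ne_zero.mpr (Ne.symm hchain.1)
      | 1 =>
          simpa [interL] using hbw.1
      | (j + 2) =>
          have h' : j < (interL u b t).length := by
            simpa [interL] using h
          have := ih b hbw.2.1 hbw.2.2
            (fun q hq => hmem q (List.mem_cons_of_mem _ hq)) hchain.2 j h'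
          rw [Nat.add_mod_right]
          simpa [interL] using this

lemma main_zero {A : Type*} [Ring A] [StarRing A] [Algebra ℂ A] [StarModule ℂ A]
    (τ : A → ℂ) (hτ : IsTracialState τ) (B : StarSubalgebra ℂ A) (Y : Set A)
    (hfree : FreeSets τ Y {b : A | b ∈ B ∧ τ b = 0})
    (n : ℕ) (u : A) (huB : u ∈ B) (hu : IsUnitary u)
    (hupow : ∀ k : ℕ, 1 ≤ k → k ≤ n - 1 → τ (u ^ k) = 0)
    (l : List (ℤ × A)) (hl : l ≠ [])
    (hmem : ∀ p ∈ l, p.2 ∈ Y ∧ 0 ≤ p.1 ∧ p.1 ≤ (n : ℤ) - 1)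
    (hchain : List.Chain' (fun p q : ℤ × A => p.1 ≠ q.1) l) :
    τ ((l.map (conjF u)).prod) = 0 := by
  obtain ⟨⟨a₀, w₀⟩, t, rfl⟩ : ∃ p t, l = p :: t := by
    cases l with
    | nil => exact absurd rfl hl
    | cons p t => exact ⟨p, t, rfl⟩
  have htr := hτ.2.2.2
  have hch : List.Chain (fun x y : ℤ => x ≠ y) a₀ (t.map Prod.fst) :=
    (List.isChain_map (R := fun x y : ℤ => x ≠ y) Prod.fst (l := (a₀, w₀) :: t)).2 hchain
  have hhead := hmem (a₀, w₀) List.mem_cons_self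
  set le : ℤ := ((((a₀, w₀) :: t).getLast?.map Prod.fst).getD a₀) with hle
  obtain ⟨pl, hpl, hple⟩ : ∃ p ∈ (a₀, w₀) :: t, p.1 = le := by
    refine ⟨((a₀, w₀) :: t).getLast (by simp), List.getLast_mem _, ?_⟩
    rw [hle, List.getLast?_eq_getLast (l := (a₀, w₀) :: t) (by simp)]
    simp
  have hlb := hmem pl hpl
  set L : List A := w₀ :: interL u a₀ t with hLdef
  have hinter : (interL u a₀ ((a₀, w₀) :: t)).prod = L.prod := by
    rw [interL, sub_self, zpowU_zero, List.prod_cons, one_mul, hLdef]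
  have hA := interL_prod u hu ((a₀, w₀) :: t) a₀
  rw [hinter, ← hle] at hA
  have c1 : zpowU u a₀ * zpowU u (-a₀) = 1 := by
    rw [zpowU_mul u hu, add_neg_cancel, zpowU_zero]
  have c2 : zpowU u le * zpowU u (-le) = 1 := by
    rw [zpowU_mul u hu, add_neg_cancel, zpowU_zero]
  have hP : (((a₀, w₀) :: t).map (conjF u)).prod = zpowU u a₀ * L.prod * zpowU u (-le) := by
    rw [hA]
    simp only [mul_assoc]
    rw [c2, mul_one, ← mul_assoc, c1, one_mul]
  have htau : τ ((((a₀, w₀) :: t).map (conjF u)).prod) = τ (zpowU u (a₀ - le) * L.prod) := by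
    rw [hP, htr (zpowU u a₀ * L.prod) (zpowU u (-le)), ← mul_assoc, zpowU_mul u hu,
      neg_add_eq_sub]
  have hLmem : ∀ (j : ℕ) (hj : j < L.length),
      if j % 2 = 0 then L.get ⟨j, hj⟩ ∈ Y
      else L.get ⟨j, hj⟩ ∈ {b : A | b ∈ B ∧ τ b = 0} := by
    intro j hj
    match j, hj with
    | 0, hj => exact hhead.1
    | (j+1), hj =>
        have hj' : j < (interL u a₀ t).length := by
          rw [hLdef] at hj
          simpa using hj
        have hmm := interL_get_mem τ hτ B Y n u huB hupow t a₀ hhead.2.1 hhead.2.2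
          (fun q hq => hmem q (List.mem_cons_of_mem _ hq)) hch j hj'
        have hget : L.get ⟨j + 1, hj⟩ = (interL u a₀ t).get ⟨j, hj'⟩ := rfl
        rw [hget]
        by_cases hp : j % 2 = 0
        · rw [if_pos hp] at hmm
          rw [if_neg (by omega)]
          exact hmm
        · rw [if_neg hp] at hmm
          rw [if_pos (by omega)]
          exact hmm
  rw [htau]
  by_cases hae : a₀ = le
  · rw [show a₀ - le = 0 by omega, zpowU_zero, one_mul]
    have h1 : 1 ≤ L.length := by rw [hLdef]; simp
    have hz := hfree L.length h1 L.get (Or.inl (fun s => hLmem s.1 s.2))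
    rwa [List.ofFn_get] at hz
  · rw [← List.prod_cons]
    have h1 : 1 ≤ (zpowU u (a₀ - le) :: L).length := by simp
    have hcond : ∀ s : Fin (zpowU u (a₀ - le) :: L).length,
        if (s : ℕ) % 2 = 0 then (zpowU u (a₀ - le) :: L).get s ∈ {b : A | b ∈ B ∧ τ b = 0}
        else (zpowU u (a₀ - le) :: L).get s ∈ Y := by
      rintro ⟨s, hs⟩
      simp only [Fin.val_mk]
      match s, hs with
      | 0, hs =>
          simp only [Nat.zero_mod, if_pos rfl]
          refine ⟨zpowU_mem B u huB _, tau_zpowU τ hτ n u hupow _ (by omega) (by omega) (by omega)⟩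
      | (j+1), hs =>
          have hj : j < L.length := by simpa using hs
          have hmm := hLmem j hj
          have hget : (zpowU u (a₀ - le) :: L).get ⟨j + 1, hs⟩ = L.get ⟨j, hj⟩ := rfl
          rw [hget]
          by_cases hp : j % 2 = 0
          · rw [if_pos hp] at hmm
            rw [if_neg (by omega)]
            exact hmm
          · rw [if_neg hp] at hmm
            rw [if_pos (by omega)]
            exact hmm
    have hz := hfree _ h1 (zpowU u (a₀ - le) :: L).get (Or.inr hcond)
    rwa [List.ofFn_get] at hz


end Aux3

lemma word_case {A : Type*} [Ring A] [StarRing A] [Algebra ℂ A] [StarModule ℂ A]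
    (τ : A → ℂ) (hτ : IsTracialState τ) (B : StarSubalgebra ℂ A) (Y : Set A)
    (hfree : FreeSets τ Y {b : A | b ∈ B ∧ τ b = 0})
    (n : ℕ) (u : A) (huB : u ∈ B) (hu : IsUnitary u)
    (hupow : ∀ k : ℕ, 1 ≤ k → k ≤ n - 1 → τ (u ^ k) = 0)
    {m : ℕ} (hm : m ≠ 0) (i : Fin m → Fin n)
    (hne : ∀ s t : Fin m, (t : ℕ) = (s : ℕ) + 1 → i s ≠ i t)
    (w : Fin m → A) (hw : ∀ s, w s ∈ Y) :
    τ ((List.ofFn fun s => u ^ (i s : ℕ) * w s * star u ^ (i s : ℕ)).prod) = 0 := by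
  have key := main_zero τ hτ B Y hfree n u huB hu hupow
    (List.ofFn fun s : Fin m => ((((i s : ℕ) : ℤ)), w s))
    (fun h => by
      have := congrArg List.length h
      simp at this
      omega)
    (fun p hp => by
      rw [List.mem_ofFn] at hp
      obtain ⟨s, rfl⟩ := hp
      dsimp only
      exact ⟨hw s, Int.natCast_nonneg _, by have := (i s).isLt; omega⟩)
    (by
      unfold List.Chain'
      rw [List.isChain_ofFn]
      intro j hj
      dsimp only
      intro hEq
      refine hne ⟨j, by omega⟩ ⟨j + 1, hj⟩ rfl (Fin.ext ?_)
      exact_mod_cast hEq)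
  rw [List.map_ofFn] at key
  rw [← key]
  refine congrArg τ (congrArg List.prod (congrArg List.ofFn (funext fun s => ?_)))
  simp only [Function.comp, conjF, zpowU_natCast, zpowU_neg_natCast]

end AuxProof


/-- If `Y = Y*` is a set of trace-zero elements that is freely
independent from the trace-zero part of a unital ∗-subalgebra `B`, and `u ∈ B`
is a unitary with `τ(u^k) = 0` for `1 ≤ k ≤ n-1`, then for all `y₁, …, yₙ ∈ Y`
the family `(u^{k-1} y_k u^{-(k-1)})_k` is L-free. -/
theorem lfree_of_free_from_subalgebra
    {M : Type*} [NormedRing M] [StarRing M] [CStarRing M] [NormedAlgebra ℂ M]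
    [StarModule ℂ M] [CompleteSpace M]
    (τ : M → ℂ) (hτ : IsTracialState τ)
    (B : StarSubalgebra ℂ M) (Y : Set M)
    (hYstar : ∀ y ∈ Y, star y ∈ Y) (hYtrace : ∀ y ∈ Y, τ y = 0)
    (hfree : FreeSets τ Y {b : M | b ∈ B ∧ τ b = 0})
    (n : ℕ) (hn : 1 ≤ n)
    (u : M) (huB : u ∈ B) (hu : IsUnitary u)
    (hupow : ∀ k : ℕ, 1 ≤ k → k ≤ n - 1 → τ (u ^ k) = 0)
    (y : Fin n → M) (hy : ∀ k, y k ∈ Y) :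
    IsLFree τ (fun k : Fin n => u ^ (k : ℕ) * y k * (star u) ^ (k : ℕ)) := by
  intro k hk i hne
  have hm : 2 * k ≠ 0 := by omega
  have hstar : ∀ j : Fin n,
      star (u ^ (j : ℕ) * y j * star u ^ (j : ℕ)) =
        u ^ (j : ℕ) * star (y j) * star u ^ (j : ℕ) := by
    intro j
    simp only [star_mul, star_pow, star_star, mul_assoc]
  constructor
  · have h0 := word_case τ hτ B Y hfree n u huB hu hupow hm i hne
      (fun s => if (s : ℕ) % 2 = 0 then y (i s) else star (y (i s)))
      (fun s => by split; exacts [hy (i s), hYstar _ (hy (i s))])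
    rw [LWord, ← h0]
    refine congrArg τ (congrArg List.prod (congrArg List.ofFn (funext fun s => ?_)))
    by_cases hp : (s : ℕ) % 2 = 0
    · simp only [if_pos hp]
    · simp only [if_neg hp, hstar (i s)]
  · have h0 := word_case τ hτ B Y hfree n u huB hu hupow hm i hne
      (fun s => if (s : ℕ) % 2 = 0 then star (y (i s)) else y (i s))
      (fun s => by split; exacts [hYstar _ (hy (i s)), hy (i s)])
    rw [LWordStar, ← h0]
    refine congrArg τ (congrArg List.prod (congrArg List.ofFn (funext fun s => ?_)))
    by_cases hp : (s : ℕ) % 2 = 0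
    · simp only [if_pos hp, hstar (i s)]
    · simp only [if_neg hp]
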